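/- Let a, b, c be integers with Δ = b² - 4ac not a perfect square and Δ > 0, let Q = ((2a, b), (b, 2c)) and A = ((-b, -2c), (2a, b)). For any integer solution (t, u) of t² - Δ·u² = 4, the matrix g = (1/2)(t·I₂ + u·A) has integer entries, determinant 1, and satisfies gᵀ·Q·g = Q. Consequently, the isometry group of the even lattice with Gram matrix Q is infinite. -/
import Mathlib

open Matrix

lemma key_props (a b c t u k : ℤ) (ht : t ^ 2 - (b ^ 2 - 4 * a * c) * u ^ 2 = 4)
    (hk : t - b * u = 2 * k) :
    (2 : ℤ) • (!![k, -(c*u); a*u, k + b*u] : Matrix (Fin 2) (Fin 2) ℤ) =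
      t • (1 : Matrix (Fin 2) (Fin 2) ℤ) + u • !![-b, -2 * c; 2 * a, b] ∧
    (!![k, -(c*u); a*u, k + b*u] : Matrix (Fin 2) (Fin 2) ℤ).det = 1 ∧
    (!![k, -(c*u); a*u, k + b*u] : Matrix (Fin 2) (Fin 2) ℤ)ᵀ * !![2 * a, b; b, 2 * c] *
      !![k, -(c*u); a*u, k + b*u] = !![2 * a, b; b, 2 * c] := by
  have h4 : 4 * (k ^ 2 + k * b * u + a * c * u ^ 2) = 4 := by
    linear_combination ht - (t + b * u + 2 * k) * hk
  have hdet : k ^ 2 + k * b * u + a * c * u ^ 2 = 1 := by linarith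
  have hT : (!![k, -(c*u); a*u, k + b*u] : Matrix (Fin 2) (Fin 2) ℤ)ᵀ
      = !![k, a*u; -(c*u), k + b*u] := by
    ext i j; fin_cases i <;> fin_cases j <;> simp
  have hI : t • (1 : Matrix (Fin 2) (Fin 2) ℤ) = !![t, 0; 0, t] := by
    ext i j; fin_cases i <;> fin_cases j <;> simp [Matrix.one_apply]
  refine ⟨?_, ?_, ?_⟩
  · rw [hI, Matrix.smul_of, Matrix.smul_of]
    ext i j
    fin_cases i <;> fin_cases j <;> simp <;> linarith
  · simp [Matrix.det_fin_two_of]; linear_combination hdet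
  · rw [hT, Matrix.mul_fin_two, Matrix.mul_fin_two]
    ext i j
    fin_cases i <;> fin_cases j <;> simp
    · linear_combination (2*a) * hdet
    · linear_combination b * hdet
    · linear_combination b * hdet
    · linear_combination (2*c) * hdet

open Matrix in
theorem stmt_9 (a b c : ℤ)
    (hΔ : 0 < b ^ 2 - 4 * a * c) (hns : ¬ ∃ n : ℤ, b ^ 2 - 4 * a * c = n ^ 2)
    (Q A : Matrix (Fin 2) (Fin 2) ℤ)
    (hQ : Q = !![2 * a, b; b, 2 * c]) (hA : A = !![-b, -2 * c; 2 * a, b]) :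
    (∀ t u : ℤ, t ^ 2 - (b ^ 2 - 4 * a * c) * u ^ 2 = 4 →
      ∃ g : Matrix (Fin 2) (Fin 2) ℤ,
        (2 : ℤ) • g = t • (1 : Matrix (Fin 2) (Fin 2) ℤ) + u • A ∧
        g.det = 1 ∧ gᵀ * Q * g = Q) ∧
    {g : Matrix (Fin 2) (Fin 2) ℤ | gᵀ * Q * g = Q}.Infinite := by
  subst hQ hA
  constructor
  · intro t u ht
    -- parity: t ≡ b*u (mod 2)
    have hprod : (t - b * u) * (t + b * u) = 4 * (1 - a * c * u ^ 2) := by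
      linear_combination ht
    have heven : Even (t - b * u) := by
      have h2 : Even ((t - b * u) * (t + b * u)) :=
        ⟨2 * (1 - a * c * u ^ 2), by rw [hprod]; ring⟩
      rcases Int.even_mul.mp h2 with h | h
      · exact h
      · rcases h with ⟨m, hm⟩
        exact ⟨m - b * u, by omega⟩
    obtain ⟨k, hk⟩ := heven
    have hk' : t - b * u = 2 * k := by omega
    obtain ⟨h1, h2, h3⟩ := key_props a b c t u k ht hk'
    exact ⟨_, h1, h2, h3⟩
  · -- infinitude
    have hdsq : ¬ IsSquare (b ^ 2 - 4 * a * c) := by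
      rintro ⟨r, hr⟩
      exact hns ⟨r, by rw [hr]; ring⟩
    obtain ⟨a₁, ha₁⟩ := Pell.IsFundamental.exists_of_not_isSquare hΔ hdsq
    set X : ℤ → ℤ := fun n => ((a₁ ^ n : Pell.Solution₁ (b ^ 2 - 4 * a * c))).x with hX
    set Y : ℤ → ℤ := fun n => ((a₁ ^ n : Pell.Solution₁ (b ^ 2 - 4 * a * c))).y with hY
    have hYmono : StrictMono Y := ha₁.y_strictMono
    have hac : a ≠ 0 ∨ c ≠ 0 := by
      by_contra h
      push_neg at h
      exact hns ⟨b, by rw [h.1, h.2]; ring⟩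
    apply Set.infinite_of_injective_forall_mem
      (f := fun n : ℤ => (!![X n - b * Y n, -(c * (2 * Y n));
        a * (2 * Y n), (X n - b * Y n) + b * (2 * Y n)] : Matrix (Fin 2) (Fin 2) ℤ))
    · intro m n hmn
      apply hYmono.injective
      rcases hac with h | h
      · have := congrFun (congrFun hmn 1) 0
        simp only [Matrix.cons_val', Matrix.cons_val_zero, Matrix.cons_val_one,
          Matrix.head_cons, Matrix.empty_val', Matrix.cons_val_fin_one, Matrix.head_fin_const,
          Matrix.of_apply] at this
        have := mul_left_cancel₀ h this
        omega
      · have := congrFun (congrFun hmn 0) 1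
        simp only [Matrix.cons_val', Matrix.cons_val_zero, Matrix.cons_val_one,
          Matrix.head_cons, Matrix.empty_val', Matrix.cons_val_fin_one, Matrix.head_fin_const,
          Matrix.of_apply] at this
        have h2 : c * (2 * Y m) = c * (2 * Y n) := by omega
        have := mul_left_cancel₀ h h2
        omega
    · intro n
      have hprop := (a₁ ^ n : Pell.Solution₁ (b ^ 2 - 4 * a * c)).prop
      have ht : (2 * X n) ^ 2 - (b ^ 2 - 4 * a * c) * (2 * Y n) ^ 2 = 4 := by
        linear_combination 4 * hprop
      have hk : 2 * X n - b * (2 * Y n) = 2 * (X n - b * Y n) := by ring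
      exact (key_props a b c (2 * X n) (2 * Y n) (X n - b * Y n) ht hk).2.2
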